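/- Let n ≥ 1, let A, X be n×n complex matrices and let p be a polynomial with complex coefficients such that XA − AX = p(X). Then A and X are simultaneously triangularizable: there exists an invertible n×n complex matrix P such that both P⁻¹AP and P⁻¹XP are upper triangular (all entries below the diagonal vanish). -/

import Mathlib

open Polynomial Module LinearMap Matrix

private lemma comm_pow_aux {R : Type*} [Ring R] (y a nn : R) (h1 : y * a - a * y = nn)
    (h2 : y * nn = nn * y) :
    ∀ k : ℕ, y ^ (k + 1) * a - a * y ^ (k + 1) = (k + 1) • (nn * y ^ k) := by
  intro k
  induction k with
  | zero => simpa using h1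
  | succ k ih =>
    have hya : y * a = nn + a * y := sub_eq_iff_eq_add.mp h1
    have ih' : y ^ (k+1) * a = (k + 1) • (nn * y ^ k) + a * y ^ (k+1) :=
      sub_eq_iff_eq_add.mp ih
    have key : y ^ (k + 2) * a = (k+2) • (nn * y ^ (k+1)) + a * y ^ (k+2) := by
      calc y ^ (k + 2) * a = y * (y ^ (k+1) * a) := by rw [pow_succ', mul_assoc]
        _ = y * ((k + 1) • (nn * y ^ k) + a * y ^ (k+1)) := by rw [ih']
        _ = (k+1) • (y * nn * y ^ k) + (y * a) * y ^ (k+1) := by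
            rw [mul_add, mul_smul_comm, mul_assoc, mul_assoc]
        _ = (k+1) • (nn * (y * y ^ k)) + (nn + a * y) * y ^ (k+1) := by
            rw [h2, hya, mul_assoc]
        _ = (k+1) • (nn * y ^ (k+1)) + (nn * y ^ (k+1) + a * (y * y ^ (k+1))) := by
            rw [← pow_succ', add_mul, mul_assoc]
        _ = (k+2) • (nn * y ^ (k+1)) + a * y ^ (k+2) := by
            rw [← pow_succ', succ_nsmul (nn * y ^ (k+1)) (k+1)]
            generalize nn * y ^ (k+1) = u
            generalize a * y ^ (k+2) = w
            abel
    rw [key]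
    abel

private lemma pow_eigvec {V : Type*} [AddCommGroup V] [Module ℂ V]
    (f : Module.End ℂ V) (lam : ℂ) (v : V) (hv : f v = lam • v) (k : ℕ) :
    (f ^ k) v = lam ^ k • v := by
  induction k with
  | zero => simp
  | succ k ih2 =>
    rw [pow_succ', Module.End.mul_apply, ih2, _root_.map_smul, hv, smul_smul, ← pow_succ]

private lemma eigvec_aeval {V : Type*} [AddCommGroup V] [Module ℂ V]
    (f : Module.End ℂ V) (q : ℂ[X]) (lam : ℂ) (v : V) (hv : f v = lam • v) :
    (aeval f q) v = q.eval lam • v := by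
  induction q using Polynomial.induction_on with
  | C c => simp [Module.algebraMap_end_apply]
  | add q r hq hr => simp [hq, hr, add_smul]
  | monomial n c ih =>
    simp only [_root_.map_mul, aeval_C, aeval_X_pow, Module.End.mul_apply,
      Module.algebraMap_end_apply, eval_mul, eval_C, eval_pow, eval_X]
    rw [pow_eigvec f lam v hv, smul_smul]

private lemma trace_zero_eval {W : Type*} [AddCommGroup W] [Module ℂ W]
    [FiniteDimensional ℂ W] [Nontrivial W]
    (x a nn : Module.End ℂ W) (hrel : x * a - a * x = nn) (c : ℂ)
    (hnil : IsNilpotent (nn - c • 1)) : c = 0 := by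
  have htrn2 : LinearMap.trace ℂ W nn = 0 := by
    rw [← hrel, map_sub, LinearMap.trace_mul_comm, sub_self]
  have htr1 : LinearMap.trace ℂ W (nn - c • 1) = 0 :=
    (LinearMap.isNilpotent_trace_of_isNilpotent hnil).eq_zero
  have hdec : LinearMap.trace ℂ W (nn - c • 1)
      = LinearMap.trace ℂ W nn - c * (Module.finrank ℂ W) := by
    rw [map_sub, _root_.map_smul, LinearMap.trace_one, smul_eq_mul]
  rw [htr1, htrn2, zero_sub] at hdec
  have hdec2 : c * (Module.finrank ℂ W) = 0 := by
    have := hdec.symm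
    rwa [neg_eq_zero] at this
  rcases mul_eq_zero.mp hdec2 with h9 | h9
  · exact h9
  · exact absurd h9 (by exact_mod_cast Module.finrank_pos.ne')

private lemma exists_common_eigvec (m : ℕ) (A X : Matrix (Fin (m+1)) (Fin (m+1)) ℂ)
    (p : ℂ[X]) (h : X * A - A * X = aeval X p) :
    ∃ (v : Fin (m+1) → ℂ) (lam mu : ℂ), v ≠ 0 ∧ X *ᵥ v = lam • v ∧ A *ᵥ v = mu • v := by
  classical
  let g : Matrix (Fin (m+1)) (Fin (m+1)) ℂ ≃ₐ[ℂ] Module.End ℂ (Fin (m+1) → ℂ) := Matrix.toLinAlgEquiv'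
  set X' : Module.End ℂ (Fin (m+1) → ℂ) := g X with hX'
  set A' : Module.End ℂ (Fin (m+1) → ℂ) := g A with hA'
  have hgapp : ∀ (M : Matrix (Fin (m+1)) (Fin (m+1)) ℂ) (u : (Fin (m+1) → ℂ)), g M u = M *ᵥ u := by
    intro M u
    rfl
  have hrel : X' * A' - A' * X' = aeval X' p := by
    have h3 : aeval X' p = g (aeval X p) := Polynomial.aeval_algHom_apply g.toAlgHom X p
    rw [h3, ← h, map_sub, _root_.map_mul, _root_.map_mul]
  have hcomm : ∀ q : ℂ[X], X' * aeval X' q = aeval X' q * X' := by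
    intro q
    calc X' * aeval X' q = aeval X' (Polynomial.X * q) := by
            rw [_root_.map_mul, Polynomial.aeval_X]
      _ = aeval X' (q * Polynomial.X) := by rw [mul_comm]
      _ = aeval X' q * X' := by rw [_root_.map_mul, Polynomial.aeval_X]
  obtain ⟨lam, hlam⟩ := Module.End.exists_eigenvalue X'
  obtain ⟨w, hw⟩ := hlam.exists_hasEigenvector
  have hwX : X' w = lam • w := hw.apply_eq_smul
  set N := Module.finrank ℂ (Fin (m+1) → ℂ) with hN
  have hNval : N = m + 1 := by
    rw [hN]
    exact Module.finrank_fin_fun ℂ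
  have hN1 : 1 ≤ N := by omega
  set Y : Module.End ℂ (Fin (m+1) → ℂ) := X' - lam • 1 with hY
  set Np : Module.End ℂ (Fin (m+1) → ℂ) := aeval X' p with hNp
  have hYq : ∀ q : ℂ[X], Y * aeval X' q = aeval X' q * Y := by
    intro q
    rw [hY, sub_mul, mul_sub, hcomm q, smul_mul_assoc, mul_smul_comm, one_mul, mul_one]
  have hYA : Y * A' - A' * Y = Np := by
    rw [hY, sub_mul, mul_sub, smul_mul_assoc, mul_smul_comm, one_mul, mul_one]
    rw [sub_sub_sub_cancel_right, hrel]
  have key := comm_pow_aux Y A' Np hYA (hYq p)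
  set E := X'.genEigenspace lam (N : ℕ∞) with hE
  have hmemE : ∀ u : (Fin (m+1) → ℂ), u ∈ E ↔ (Y ^ N) u = 0 := by
    intro u
    rw [hE, Module.End.mem_genEigenspace_nat, LinearMap.mem_ker, hY]
  have hwE : w ∈ E := by
    rw [hmemE]
    have : Y w = 0 := by
      rw [hY, LinearMap.sub_apply, hwX]
      simp
    rw [show N = (N - 1) + 1 by omega, pow_succ, Module.End.mul_apply, this, map_zero]
  have hmaps : ∀ q : ℂ[X], Set.MapsTo (aeval X' q) E E := by
    intro q
    exact Module.End.mapsTo_genEigenspace_of_comm (hcomm q) lam N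
  have hE_X : Set.MapsTo X' E E := by
    have := hmaps Polynomial.X
    simpa using this
  have hE_Y : Set.MapsTo Y E E := by
    intro u hu
    rw [SetLike.mem_coe, hmemE] at hu ⊢
    have : (Y ^ N) (Y u) = Y ((Y ^ N) u) := by
      rw [← Module.End.mul_apply, ← Module.End.mul_apply, ← pow_succ, ← pow_succ']
    rw [this, hu, map_zero]
  have hE_A : Set.MapsTo A' E E := by
    intro u hu
    rw [SetLike.mem_coe, hmemE] at hu
    have hu' : (Y ^ (N+1)) u = 0 := by
      rw [pow_succ', Module.End.mul_apply, hu, map_zero]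
    have e := congrArg (fun f : Module.End ℂ (Fin (m+1) → ℂ) => f u) (key N)
    simp only [LinearMap.sub_apply, Module.End.mul_apply, LinearMap.smul_apply] at e
    have e2 : (Y ^ (N+1)) (A' u) = A' ((Y ^ (N+1)) u) + (N+1) • (Np ((Y ^ N) u)) := by
      rw [← e]
      abel
    have e3 : (Y ^ (N+1)) (A' u) = 0 := by
      rw [e2, hu', hu, map_zero, map_zero, smul_zero, add_zero]
    have : A' u ∈ X'.genEigenspace lam ((N+1 : ℕ) : ℕ∞) := by
      rw [Module.End.mem_genEigenspace_nat, LinearMap.mem_ker, ← hY]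
      exact e3
    exact X'.genEigenspace_le_genEigenspace_finrank lam ((N+1 : ℕ) : ℕ∞) this
  
  -- restrictions to E
  have hNp_E : Set.MapsTo Np E E := hmaps p
  set x2 : Module.End ℂ E := X'.restrict hE_X with hx2
  set a2 : Module.End ℂ E := A'.restrict hE_A with ha2
  set n2 : Module.End ℂ E := Np.restrict hNp_E with hn2
  have hrel2 : x2 * a2 - a2 * x2 = n2 := by
    apply LinearMap.ext; intro u
    have h5 := congrArg (fun f : Module.End ℂ (Fin (m+1) → ℂ) => f (u : (Fin (m+1) → ℂ))) hrel
    simp only [LinearMap.sub_apply, Module.End.mul_apply] at h5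
    apply Subtype.ext
    simp only [LinearMap.sub_apply, Module.End.mul_apply, AddSubgroupClass.coe_sub,
      hx2, ha2, hn2, LinearMap.restrict_coe_apply]
    exact h5
  obtain ⟨q, hq⟩ := Polynomial.X_sub_C_dvd_sub_C_eval (a := lam) (p := p)
  have hDdef : Np - (p.eval lam) • 1 = Y * aeval X' q := by
    have e1 : Np - (p.eval lam) • 1 = aeval X' (p - C (p.eval lam)) := by
      rw [map_sub, aeval_C, hNp, Algebra.algebraMap_eq_smul_one]
    rw [e1, hq, _root_.map_mul, map_sub, aeval_X, aeval_C, hY,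
      Algebra.algebraMap_eq_smul_one]
  have hD_E : Set.MapsTo (Y * aeval X' q) E E := by
    intro u hu
    have := hE_Y (hmaps q hu)
    simpa [Module.End.mul_apply] using this
  have hni : IsNilpotent (n2 - (p.eval lam) • (1 : Module.End ℂ E)) := by
    refine ⟨N, ?_⟩
    have hres : n2 - (p.eval lam) • (1 : Module.End ℂ E) = (Y * aeval X' q).restrict hD_E := by
      apply LinearMap.ext; intro u
      apply Subtype.ext
      have h6 := congrArg (fun f : Module.End ℂ (Fin (m+1) → ℂ) => f (u : (Fin (m+1) → ℂ))) hDdef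
      simp only [LinearMap.sub_apply, LinearMap.smul_apply, Module.End.one_apply] at h6
      simp only [LinearMap.sub_apply, LinearMap.smul_apply, Module.End.one_apply,
        AddSubgroupClass.coe_sub, SetLike.val_smul, hn2, LinearMap.restrict_coe_apply]
      exact h6
    rw [hres, Module.End.pow_restrict N hD_E]
    apply LinearMap.ext; intro u
    apply Subtype.ext
    have hc : Commute Y (aeval X' q) := hYq q
    have h7 : ((Y * aeval X' q) ^ N) (u : (Fin (m+1) → ℂ))
        = (Y ^ N) ((aeval X' (q ^ N)) (u : (Fin (m+1) → ℂ))) := by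
      rw [hc.mul_pow, Module.End.mul_apply, map_pow]
    have h8 : (aeval X' (q ^ N)) (u : (Fin (m+1) → ℂ)) ∈ E := hmaps (q ^ N) u.2
    rw [hmemE] at h8
    simp only [LinearMap.restrict_coe_apply, LinearMap.zero_apply, ZeroMemClass.coe_zero]
    rw [h7, h8]
  have hEnt : Nontrivial E := ⟨⟨⟨w, hwE⟩, 0, by simp [Subtype.ext_iff, hw.2]⟩⟩
  have hplam : p.eval lam = 0 := trace_zero_eval x2 a2 n2 hrel2 (p.eval lam) hni
  -- eigenspace of X' is A'-invariant
  have hWA : Set.MapsTo A' (X'.eigenspace lam) (X'.eigenspace lam) := by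
    intro u hu
    rw [SetLike.mem_coe, Module.End.mem_eigenspace_iff] at hu ⊢
    have h10 := congrArg (fun f : Module.End ℂ (Fin (m+1) → ℂ) => f u) hrel
    simp only [LinearMap.sub_apply, Module.End.mul_apply] at h10
    have h11 : X' (A' u) = A' (X' u) + Np u := by rw [← h10]; abel
    rw [h11, hu, _root_.map_smul, hNp, eigvec_aeval X' p lam u hu, hplam, zero_smul, add_zero]
  have hWnt : Nontrivial (X'.eigenspace lam) := ⟨⟨⟨w, hw.1⟩, 0, by simp [Subtype.ext_iff, hw.2]⟩⟩
  obtain ⟨mu, hmu⟩ := Module.End.exists_eigenvalue (A'.restrict hWA)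
  obtain ⟨u, hu⟩ := hmu.exists_hasEigenvector
  refine ⟨(u : (Fin (m+1) → ℂ)), lam, mu, ?_, ?_, ?_⟩
  · simp only [ne_eq, ZeroMemClass.coe_eq_zero]
    exact hu.2
  · have h12 : X' (u : (Fin (m+1) → ℂ)) = lam • (u : (Fin (m+1) → ℂ)) := Module.End.mem_eigenspace_iff.mp u.2
    rw [← hgapp X]
    exact h12
  · have h13 := hu.apply_eq_smul
    have h14 : A' (u : (Fin (m+1) → ℂ)) = mu • (u : (Fin (m+1) → ℂ)) := by
      have := congrArg (fun z : X'.eigenspace lam => (z : (Fin (m+1) → ℂ))) h13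
      exact this
    rw [← hgapp A]
    exact h14

private def blk {m : ℕ} (c : ℂ) (r : Fin m → ℂ) (v : Fin m → ℂ)
    (D : Matrix (Fin m) (Fin m) ℂ) : Matrix (Fin (m+1)) (Fin (m+1)) ℂ :=
  Matrix.of (Fin.cons (Fin.cons c r) (fun i => Fin.cons (v i) (D i)))

private lemma blk_apply_00 {m : ℕ} (c : ℂ) (r v : Fin m → ℂ) (D : Matrix (Fin m) (Fin m) ℂ) :
    blk c r v D 0 0 = c := rfl

private lemma blk_apply_0s {m : ℕ} (c : ℂ) (r v : Fin m → ℂ) (D : Matrix (Fin m) (Fin m) ℂ)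
    (j : Fin m) : blk c r v D 0 j.succ = r j := rfl

private lemma blk_apply_s0 {m : ℕ} (c : ℂ) (r v : Fin m → ℂ) (D : Matrix (Fin m) (Fin m) ℂ)
    (i : Fin m) : blk c r v D i.succ 0 = v i := rfl

private lemma blk_apply_ss {m : ℕ} (c : ℂ) (r v : Fin m → ℂ) (D : Matrix (Fin m) (Fin m) ℂ)
    (i j : Fin m) : blk c r v D i.succ j.succ = D i j := rfl

private lemma blk_eq {m : ℕ} (M : Matrix (Fin (m+1)) (Fin (m+1)) ℂ) :
    M = blk (M 0 0) (fun j => M 0 j.succ) (fun i => M i.succ 0)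
      (Matrix.of fun i j => M i.succ j.succ) := by
  ext i j
  refine Fin.cases ?_ ?_ i <;> [skip; intro i'] <;>
    refine Fin.cases ?_ ?_ j <;> [skip; intro j'; skip; intro j'] <;> rfl

private lemma blk_mul {m : ℕ} (c₁ c₂ : ℂ) (r₁ r₂ v₁ v₂ : Fin m → ℂ)
    (D₁ D₂ : Matrix (Fin m) (Fin m) ℂ) :
    blk c₁ r₁ v₁ D₁ * blk c₂ r₂ v₂ D₂
      = blk (c₁ * c₂ + r₁ ⬝ᵥ v₂) (c₁ • r₂ + r₁ ᵥ* D₂) (c₂ • v₁ + D₁ *ᵥ v₂)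
        (vecMulVec v₁ r₂ + D₁ * D₂) := by
  ext i j
  refine Fin.cases ?_ ?_ i <;> [skip; intro i'] <;>
      refine Fin.cases ?_ ?_ j <;> [skip; intro j'; skip; intro j'] <;>
    simp only [Matrix.mul_apply, Fin.sum_univ_succ, blk_apply_00, blk_apply_0s, blk_apply_s0,
      blk_apply_ss, Pi.add_apply, Pi.smul_apply, smul_eq_mul, dotProduct, Matrix.vecMul,
      Matrix.mulVec, Matrix.vecMulVec_apply, Matrix.add_apply, Matrix.of_apply]
  all_goals ring

private lemma blk_one {m : ℕ} : (blk 1 0 0 1 : Matrix (Fin (m+1)) (Fin (m+1)) ℂ) = 1 := by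
  ext i j
  refine Fin.cases ?_ ?_ i <;> [skip; intro i'] <;>
      refine Fin.cases ?_ ?_ j <;> [skip; intro j'; skip; intro j'] <;>
    simp [blk_apply_00, blk_apply_0s, blk_apply_s0, blk_apply_ss, Matrix.one_apply,
      Fin.succ_ne_zero, (Fin.succ_ne_zero _).symm, Fin.succ_inj]

private def lowColZero (m : ℕ) : Subalgebra ℂ (Matrix (Fin (m+1)) (Fin (m+1)) ℂ) where
  carrier := {M | ∀ i : Fin m, M i.succ 0 = 0}
  mul_mem' := by
    intro a b ha hb i
    rw [Matrix.mul_apply, Fin.sum_univ_succ, ha i, zero_mul, zero_add]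
    exact Finset.sum_eq_zero fun k _ => by rw [hb k, mul_zero]
  add_mem' := by
    intro a b ha hb i
    simp [Matrix.add_apply, ha i, hb i]
  algebraMap_mem' := by
    intro c i
    simp [Matrix.algebraMap_matrix_apply, (Fin.succ_ne_zero i)]

private def minorHom (m : ℕ) : lowColZero m →ₐ[ℂ] Matrix (Fin m) (Fin m) ℂ where
  toFun M := Matrix.of fun i j => (M : Matrix (Fin (m+1)) (Fin (m+1)) ℂ) i.succ j.succ
  map_one' := by
    ext i j
    simp [Matrix.one_apply, Fin.succ_inj]
  map_mul' := by
    intro a b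
    ext i j
    show (↑(a * b) : Matrix (Fin (m+1)) (Fin (m+1)) ℂ) i.succ j.succ
      = ∑ k : Fin m, (a : Matrix (Fin (m+1)) (Fin (m+1)) ℂ) i.succ k.succ
          * (b : Matrix (Fin (m+1)) (Fin (m+1)) ℂ) k.succ j.succ
    rw [Subalgebra.coe_mul, Matrix.mul_apply, Fin.sum_univ_succ, a.2 i, zero_mul, zero_add]
  map_zero' := by ext i j; rfl
  map_add' := by intro a b; ext i j; rfl
  commutes' := by
    intro c
    ext i j
    simp [Matrix.algebraMap_matrix_apply, Fin.succ_inj]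

private lemma aeval_conj {m : ℕ} (Q X : Matrix (Fin m) (Fin m) ℂ) (hQ : IsUnit Q.det)
    (p : ℂ[X]) : aeval (Q⁻¹ * X * Q) p = Q⁻¹ * aeval X p * Q := by
  induction p using Polynomial.induction_on with
  | C c =>
    simp only [aeval_C]
    rw [Algebra.algebraMap_eq_smul_one, Matrix.mul_smul, Matrix.smul_mul, Matrix.mul_one,
      Matrix.nonsing_inv_mul Q hQ]
  | add q r hq hr =>
    rw [map_add, map_add, hq, hr, Matrix.mul_add, Matrix.add_mul]
  | monomial n c ih =>
    have e : ∀ (M : Matrix (Fin m) (Fin m) ℂ), aeval M (C c * Polynomial.X ^ (n+1))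
        = aeval M (C c * Polynomial.X ^ n) * M := by
      intro M
      rw [_root_.map_mul, _root_.map_mul, map_pow, map_pow, aeval_X, pow_succ, ← mul_assoc]
    rw [e, e, ih]
    simp only [Matrix.mul_assoc]
    rw [← Matrix.mul_assoc Q Q⁻¹ (X * Q), Matrix.mul_nonsing_inv Q hQ, Matrix.one_mul]

private lemma exists_unit_col0 (m : ℕ) (v : Fin (m+1) → ℂ) (hv : v ≠ 0) :
    ∃ Q : Matrix (Fin (m+1)) (Fin (m+1)) ℂ, IsUnit Q ∧ ∀ i, Q i 0 = v i := by
  classical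
  have hs : LinearIndepOn ℂ id ({v} : Set (Fin (m+1) → ℂ)) :=
    LinearIndepOn.singleton hv
  let b := Basis.extend hs
  haveI : Fintype ↥(hs.extend (Set.subset_univ ({v} : Set (Fin (m+1) → ℂ)))) :=
    FiniteDimensional.fintypeBasisIndex b
  have hvmem : v ∈ hs.extend (Set.subset_univ ({v} : Set (Fin (m+1) → ℂ))) :=
    hs.subset_extend _ rfl
  have hcard : Fintype.card ↥(hs.extend (Set.subset_univ ({v} : Set (Fin (m+1) → ℂ))))
      = m + 1 := by
    rw [← Module.finrank_eq_card_basis b, Module.finrank_fin_fun]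
  let e := (Fintype.equivFinOfCardEq hcard).trans
    (Equiv.swap (Fintype.equivFinOfCardEq hcard ⟨v, hvmem⟩) 0)
  let b' := b.reindex e
  have hb'0 : b' 0 = v := by
    have h1 : e ⟨v, hvmem⟩ = 0 := by
      simp [e, Equiv.swap_apply_left]
    have : b' (e ⟨v, hvmem⟩) = b ⟨v, hvmem⟩ := by
      simp [b', Module.Basis.reindex_apply]
    rw [h1] at this
    rw [this]
    exact Basis.extend_apply_self hs ⟨v, hvmem⟩
  refine ⟨(Pi.basisFun ℂ (Fin (m+1))).toMatrix ⇑b', ?_, ?_⟩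
  · haveI := (Pi.basisFun ℂ (Fin (m+1))).invertibleToMatrix b'
    exact isUnit_of_invertible _
  · intro i
    rw [Basis.toMatrix_apply, hb'0, Pi.basisFun_repr]

private lemma vecMulVec_zero_left {m : ℕ} (r : Fin m → ℂ) :
    vecMulVec (0 : Fin m → ℂ) r = 0 := by
  ext i j
  simp [Matrix.vecMulVec_apply]

private lemma blk_mul_blkR {m : ℕ} (c : ℂ) (r : Fin m → ℂ) (D P' : Matrix (Fin m) (Fin m) ℂ) :
    blk c r 0 D * blk 1 0 0 P' = blk c (r ᵥ* P') 0 (D * P') := by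
  rw [blk_mul, vecMulVec_zero_left, zero_add]
  congr 1 <;> simp

private lemma blkR_mul_blk {m : ℕ} (c : ℂ) (r : Fin m → ℂ) (D P' : Matrix (Fin m) (Fin m) ℂ) :
    blk 1 0 0 P' * blk c r 0 D = blk c r 0 (P' * D) := by
  rw [blk_mul, vecMulVec_zero_left, zero_add]
  congr 1 <;> simp

private lemma tri_aux (m : ℕ) : ∀ (A X : Matrix (Fin m) (Fin m) ℂ) (p : ℂ[X]),
    X * A - A * X = aeval X p →
    ∃ P T S : Matrix (Fin m) (Fin m) ℂ, IsUnit P ∧ A * P = P * T ∧ X * P = P * S ∧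
      (∀ i j, j < i → T i j = 0) ∧ (∀ i j, j < i → S i j = 0) := by
  induction m with
  | zero =>
    intro A X p h
    exact ⟨1, A, X, isUnit_one, by rw [Matrix.mul_one, Matrix.one_mul],
      by rw [Matrix.mul_one, Matrix.one_mul], fun i => i.elim0, fun i => i.elim0⟩
  | succ m ih =>
    intro A X p h
    obtain ⟨v, lam, mu, hv0, hXv, hAv⟩ := exists_common_eigvec m A X p h
    obtain ⟨Q, hQ, hQv⟩ := exists_unit_col0 m v hv0
    have hQd : IsUnit Q.det := (Matrix.isUnit_iff_isUnit_det Q).mp hQ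
    set A₁ := Q⁻¹ * A * Q with hA₁
    set X₁ := Q⁻¹ * X * Q with hX₁
    have colfact : ∀ (M : Matrix (Fin (m+1)) (Fin (m+1)) ℂ) (c : ℂ),
        M *ᵥ v = c • v → ∀ i : Fin m, (Q⁻¹ * M * Q) i.succ 0 = 0 := by
      intro M c hM i
      have h1 : Q *ᵥ (Pi.single (0 : Fin (m+1)) (1:ℂ) : Fin (m+1) → ℂ) = v := by
        funext k
        rw [Matrix.mulVec_single]
        simp [hQv k]
      have h3 : Q⁻¹ *ᵥ v = (Pi.single (0 : Fin (m+1)) (1:ℂ) : Fin (m+1) → ℂ) := by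
        rw [← h1, Matrix.mulVec_mulVec, Matrix.nonsing_inv_mul Q hQd, Matrix.one_mulVec]
      have h2 : (Q⁻¹ * M * Q) *ᵥ Pi.single (0:Fin (m+1)) (1:ℂ)
          = c • (Pi.single (0:Fin (m+1)) (1:ℂ) : Fin (m+1) → ℂ) := by
        rw [← Matrix.mulVec_mulVec, h1, ← Matrix.mulVec_mulVec, hM, Matrix.mulVec_smul, h3]
      have h4 := congrFun h2 i.succ
      have h5 : (Pi.single (0:Fin (m+1)) (1:ℂ) : Fin (m+1) → ℂ) i.succ = 0 := by
        simp [Pi.single_eq_of_ne (Fin.succ_ne_zero i)]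
      rw [Pi.smul_apply, h5, smul_zero] at h4
      have h6 : ((Q⁻¹ * M * Q) *ᵥ Pi.single (0:Fin (m+1)) (1:ℂ)) i.succ
          = (Q⁻¹ * M * Q) i.succ 0 := by
        rw [Matrix.mulVec_single]
        simp
      rw [h6] at h4
      exact h4
    have hX₁S0 : ∀ i : Fin m, X₁ i.succ 0 = 0 := colfact X lam hXv
    have hA₁S0 : ∀ i : Fin m, A₁ i.succ 0 = 0 := colfact A mu hAv
    have hX₁S : X₁ ∈ lowColZero m := hX₁S0
    have hA₁S : A₁ ∈ lowColZero m := hA₁S0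
    have hrel1 : X₁ * A₁ - A₁ * X₁ = aeval X₁ p := by
      have e1 : X₁ * A₁ = Q⁻¹ * (X * A) * Q := by
        rw [hX₁, hA₁]
        simp only [Matrix.mul_assoc]
        rw [← Matrix.mul_assoc Q Q⁻¹ (A * Q), Matrix.mul_nonsing_inv Q hQd, Matrix.one_mul]
      have e2 : A₁ * X₁ = Q⁻¹ * (A * X) * Q := by
        rw [hX₁, hA₁]
        simp only [Matrix.mul_assoc]
        rw [← Matrix.mul_assoc Q Q⁻¹ (X * Q), Matrix.mul_nonsing_inv Q hQd, Matrix.one_mul]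
      rw [e1, e2, hX₁, aeval_conj Q X hQd, ← Matrix.sub_mul, ← Matrix.mul_sub, h]
    set x : lowColZero m := ⟨X₁, hX₁S⟩ with hx
    set a : lowColZero m := ⟨A₁, hA₁S⟩ with ha
    have hrelS : x * a - a * x = aeval x p := by
      apply Subtype.ext
      rw [Polynomial.aeval_subalgebra_coe]
      exact_mod_cast hrel1
    set X' := minorHom m x with hX'
    set A' := minorHom m a with hA'
    have hrel' : X' * A' - A' * X' = aeval X' p := by
      have h7 := congrArg (minorHom m) hrelS
      rw [map_sub, _root_.map_mul, _root_.map_mul, ← Polynomial.aeval_algHom_apply] at h7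
      exact h7
    obtain ⟨P', T', S', hP', hAP', hXP', hT', hS'⟩ := ih A' X' p hrel'
    have hP'd : IsUnit P'.det := (Matrix.isUnit_iff_isUnit_det P').mp hP'
    have hA₁blk : A₁ = blk (A₁ 0 0) (fun j => A₁ 0 j.succ) 0 A' := by
      ext i j
      refine Fin.cases ?_ ?_ i <;> [skip; intro i'] <;>
        refine Fin.cases ?_ ?_ j <;> [skip; intro j'; skip; intro j']
      · rfl
      · rfl
      · exact hA₁S0 i'
      · rfl
    have hX₁blk : X₁ = blk (X₁ 0 0) (fun j => X₁ 0 j.succ) 0 X' := by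
      ext i j
      refine Fin.cases ?_ ?_ i <;> [skip; intro i'] <;>
        refine Fin.cases ?_ ?_ j <;> [skip; intro j'; skip; intro j']
      · rfl
      · rfl
      · exact hX₁S0 i'
      · rfl
    set R := blk (1:ℂ) 0 0 P' with hR
    have hRunit : IsUnit R := by
      have h8 : R * blk 1 0 0 P'⁻¹ = 1 := by
        rw [hR, blkR_mul_blk, Matrix.mul_nonsing_inv P' hP'd, blk_one]
      have h9 : blk 1 0 0 P'⁻¹ * R = 1 := by
        rw [hR, blkR_mul_blk, Matrix.nonsing_inv_mul P' hP'd, blk_one]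
      exact ⟨⟨R, blk 1 0 0 P'⁻¹, h8, h9⟩, rfl⟩
    refine ⟨Q * R, blk (A₁ 0 0) ((fun j => A₁ 0 j.succ) ᵥ* P') 0 T',
      blk (X₁ 0 0) ((fun j => X₁ 0 j.succ) ᵥ* P') 0 S', hQ.mul hRunit, ?_, ?_, ?_, ?_⟩
    · have h10 : A * Q = Q * A₁ := by
        rw [hA₁, ← Matrix.mul_assoc, ← Matrix.mul_assoc, Matrix.mul_nonsing_inv Q hQd,
          Matrix.one_mul]
      calc A * (Q * R) = Q * (A₁ * R) := by
            rw [← Matrix.mul_assoc, h10, Matrix.mul_assoc]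
        _ = Q * (R * blk (A₁ 0 0) ((fun j => A₁ 0 j.succ) ᵥ* P') 0 T') := by
            rw [hR]
            conv_lhs => rw [hA₁blk]
            rw [blk_mul_blkR, hAP', ← blkR_mul_blk]
        _ = (Q * R) * blk (A₁ 0 0) ((fun j => A₁ 0 j.succ) ᵥ* P') 0 T' := by
            rw [Matrix.mul_assoc]
    · have h10 : X * Q = Q * X₁ := by
        rw [hX₁, ← Matrix.mul_assoc, ← Matrix.mul_assoc, Matrix.mul_nonsing_inv Q hQd,
          Matrix.one_mul]
      calc X * (Q * R) = Q * (X₁ * R) := by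
            rw [← Matrix.mul_assoc, h10, Matrix.mul_assoc]
        _ = Q * (R * blk (X₁ 0 0) ((fun j => X₁ 0 j.succ) ᵥ* P') 0 S') := by
            rw [hR]
            conv_lhs => rw [hX₁blk]
            rw [blk_mul_blkR, hXP', ← blkR_mul_blk]
        _ = (Q * R) * blk (X₁ 0 0) ((fun j => X₁ 0 j.succ) ᵥ* P') 0 S' := by
            rw [Matrix.mul_assoc]
    · intro i j hij
      rcases Fin.eq_zero_or_eq_succ i with rfl | ⟨i', rfl⟩
      · exact absurd hij (Fin.not_lt_zero j)
      · rcases Fin.eq_zero_or_eq_succ j with rfl | ⟨j', rfl⟩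
        · exact blk_apply_s0 _ _ _ _ i'
        · rw [blk_apply_ss]
          exact hT' i' j' (by exact_mod_cast Fin.succ_lt_succ_iff.mp hij)
    · intro i j hij
      rcases Fin.eq_zero_or_eq_succ i with rfl | ⟨i', rfl⟩
      · exact absurd hij (Fin.not_lt_zero j)
      · rcases Fin.eq_zero_or_eq_succ j with rfl | ⟨j', rfl⟩
        · exact blk_apply_s0 _ _ _ _ i'
        · rw [blk_apply_ss]
          exact hS' i' j' (by exact_mod_cast Fin.succ_lt_succ_iff.mp hij)

theorem stmt1 (n : ℕ) (hn : 1 ≤ n) (A X : Matrix (Fin n) (Fin n) ℂ)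
    (p : Polynomial ℂ) (h : X * A - A * X = Polynomial.aeval X p) :
    ∃ P : Matrix (Fin n) (Fin n) ℂ, IsUnit P ∧
      (∀ i j : Fin n, j < i → (P⁻¹ * A * P) i j = 0) ∧
      (∀ i j : Fin n, j < i → (P⁻¹ * X * P) i j = 0) := by
  obtain ⟨P, T, S, hP, hAP, hXP, hT, hS⟩ := tri_aux n A X p h
  have hPd : IsUnit P.det := (Matrix.isUnit_iff_isUnit_det P).mp hP
  have eA : P⁻¹ * A * P = T := by
    rw [Matrix.mul_assoc, hAP, ← Matrix.mul_assoc, Matrix.nonsing_inv_mul P hPd, Matrix.one_mul]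
  have eX : P⁻¹ * X * P = S := by
    rw [Matrix.mul_assoc, hXP, ← Matrix.mul_assoc, Matrix.nonsing_inv_mul P hPd, Matrix.one_mul]
  exact ⟨P, hP, fun i j hij => by rw [eA]; exact hT i j hij,
    fun i j hij => by rw [eX]; exact hS i j hij⟩
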